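/- Let d ≥ 1, let p, ρ : ℝ^d → ℝ be positive functions with ρ differentiable, and let k : ℝ^d → ℝ^d → ℝ be differentiable in its first argument. Define the kernel k'(y, x) = ρ(y)·ρ(x)·k(y, x). Then for all x, y ∈ ℝ^d, (1/p(y))·∇_y k'(y, x) = ρ(x)·(ρ(y)/p(y))·(∇log ρ(y)·k(y, x) + ∇_y k(y, x)). Consequently, the inverse-probability update Δx_i ∝ ∑_j (1/p(x_j)) ∇_{x_j} k'(x_j, x_i), which uses the constant surrogate ρ ≡ 1 with kernel k', reduces (up to the factor ρ(x_i) absorbed in the step size) to the gradient-free SVGD update ∑_j w(x_j)(∇log ρ(x_j) k(x_j,x_i) + ∇_{x_j} k(x_j,x_i)) with w = ρ/p and kernel k. -/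

import Mathlib

open Real
open scoped InnerProductSpace BigOperators

section aux

variable {F : Type*} [NormedAddCommGroup F] [InnerProductSpace ℝ F] [CompleteSpace F]

lemma hasGradientAt_of_fderiv {f : F → ℝ} {L : F →L[ℝ] ℝ} {x : F}
    (h : HasFDerivAt f L x) :
    HasGradientAt f ((InnerProductSpace.toDual ℝ F).symm L) x := by
  rwa [hasGradientAt_iff_hasFDerivAt, LinearIsometryEquiv.apply_symm_apply]

lemma gradient_mul {f g : F → ℝ} {x : F}
    (hf : DifferentiableAt ℝ f x) (hg : DifferentiableAt ℝ g x) :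
    gradient (fun z => f z * g z) x = f x • gradient g x + g x • gradient f x := by
  have hF := hf.hasFDerivAt.mul hg.hasFDerivAt
  have := hasGradientAt_of_fderiv hF
  rw [show (fun z => f z * g z) = f * g from rfl, this.gradient]
  rw [map_add, LinearIsometryEquiv.map_smul, LinearIsometryEquiv.map_smul]
  have h1 : ((InnerProductSpace.toDual ℝ F).symm (fderiv ℝ g x)) = gradient g x := rfl
  have h2 : ((InnerProductSpace.toDual ℝ F).symm (fderiv ℝ f x)) = gradient f x := rfl
  rw [h1, h2]

lemma gradient_log_comp {ρ : F → ℝ} {x : F} (h : 0 < ρ x)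
    (hd : DifferentiableAt ℝ ρ x) :
    gradient (fun z => Real.log (ρ z)) x = (ρ x)⁻¹ • gradient ρ x := by
  have hF : HasFDerivAt (fun z => Real.log (ρ z)) ((ρ x)⁻¹ • fderiv ℝ ρ x) x := by
    exact (Real.hasDerivAt_log h.ne').comp_hasFDerivAt x hd.hasFDerivAt
  have := hasGradientAt_of_fderiv hF
  rw [this.gradient, LinearIsometryEquiv.map_smul]
  rfl

end aux

/-- The inverse-probability update with the kernel `k'(y,x) = ρ(y)ρ(x)k(y,x)`
(i.e. the constant surrogate `ρ ≡ 1`) reduces, up to the factor `ρ(x_i)`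
absorbed in the step size, to the gradient-free SVGD update with surrogate `ρ`
and kernel `k`. -/
theorem gf_svgd_stmt8 (d : ℕ) (hd : 1 ≤ d)
    (p ρ : EuclideanSpace ℝ (Fin d) → ℝ)
    (hp : ∀ y, 0 < p y) (hρ : ∀ y, 0 < ρ y) (hρd : Differentiable ℝ ρ)
    (k : EuclideanSpace ℝ (Fin d) → EuclideanSpace ℝ (Fin d) → ℝ)
    (hk : ∀ y, Differentiable ℝ (fun z => k z y))
    (k' : EuclideanSpace ℝ (Fin d) → EuclideanSpace ℝ (Fin d) → ℝ)
    (hk' : k' = fun y x => ρ y * ρ x * k y x)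
    (w : EuclideanSpace ℝ (Fin d) → ℝ) (hw : w = fun y => ρ y / p y) :
    (∀ x y, (1 / p y) • gradient (fun z => k' z x) y
        = (ρ x * (ρ y / p y)) •
            (k y x • gradient (fun z => Real.log (ρ z)) y
              + gradient (fun z => k z x) y))
    ∧ (∀ (n : ℕ) (xs : Fin n → EuclideanSpace ℝ (Fin d)) (i : Fin n),
        ∑ j, (1 / p (xs j)) • gradient (fun z => k' z (xs i)) (xs j)
          = ρ (xs i) • ∑ j, w (xs j) •
              (k (xs j) (xs i) • gradient (fun z => Real.log (ρ z)) (xs j)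
                + gradient (fun z => k z (xs i)) (xs j))) := by
  have main : ∀ x y, (1 / p y) • gradient (fun z => k' z x) y
        = (ρ x * (ρ y / p y)) •
            (k y x • gradient (fun z => Real.log (ρ z)) y
              + gradient (fun z => k z x) y) := by
    intro x y
    have hfun : (fun z => k' z x) = fun z => (ρ z * k z x) * ρ x := by
      funext z; rw [hk']; ring
    rw [hfun]
    have h1 : gradient (fun z => (ρ z * k z x) * ρ x) y
        = ρ x • gradient (fun z => ρ z * k z x) y := by
      have := gradient_mul (f := fun z => ρ z * k z x) (g := fun _ => ρ x) (x := y)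
        ((hρd y).mul (hk x y)) (differentiableAt_const _)
      rw [this]
      simp [gradient_const]
    rw [h1, gradient_mul (hρd y) (hk x y), gradient_log_comp (hρ y) (hρd y)]
    rw [smul_comm (1 / p y) (ρ x)]
    rw [smul_add, smul_add, smul_smul, smul_smul, smul_smul, smul_smul, smul_smul]
    have hpne := (hp y).ne'
    have hρne := (hρ y).ne'
    match_scalars <;> field_simp <;> ring
  refine ⟨main, ?_⟩
  intro n xs i
  rw [Finset.smul_sum]
  refine Finset.sum_congr rfl fun j _ => ?_
  rw [main (xs i) (xs j), hw, smul_smul]
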